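/- arXiv:2510.02720 — 2 statements merged into one kernel-verified Lean document; each statement's English description precedes it below -/
import Mathlib

section
/- Let $L_a \in \mathbb{R}$ with $L_a < 0$, let $L_g \in \mathbb{R}^p$ be nonzero, and let $w > 0$, $\gamma > 0$. Define $a^* = \frac{-L_a}{\|L_g\|^2 + \gamma^2/w} L_g$ and $c^* = \frac{-\gamma L_a}{w\|L_g\|^2 + \gamma^2}$. Then $c^* > 0$, the constraint $L_a + \langle L_g, a^*\rangle + \gamma c^* = 0$ is active, and $(a^*, c^*)$ is a global minimizer of: minimize $\tfrac12\|a\|^2 + \tfrac{w}{2}c^2$ subject to $L_a + \langle L_g, a\rangle + \gamma c \geq 0$, $c \geq 0$. -/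
/-- Closed-form solution of the CBF-QP in the relaxed branch `La < 0`. -/
theorem stmt_1 {p : ℕ} (Lg : EuclideanSpace ℝ (Fin p)) (hLg : Lg ≠ 0)
    (La w γ : ℝ) (hw : 0 < w) (hγ : 0 < γ) (hLa : La < 0) :
    let a : EuclideanSpace ℝ (Fin p) := (-La / (‖Lg‖^2 + γ^2 / w)) • Lg
    let c : ℝ := -γ * La / (w * ‖Lg‖^2 + γ^2)
    c > 0 ∧
    La + (inner ℝ Lg a : ℝ) + γ * c = 0 ∧
    (∀ (b : EuclideanSpace ℝ (Fin p)) (d : ℝ),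
      La + (inner ℝ Lg b : ℝ) + γ * d ≥ 0 → d ≥ 0 →
      (1/2) * ‖a‖^2 + (w/2) * c^2 ≤ (1/2) * ‖b‖^2 + (w/2) * d^2) := by
  intro a c
  have hLg' : 0 < ‖Lg‖ := norm_pos_iff.mpr hLg
  have hN : (0:ℝ) < ‖Lg‖^2 := pow_pos hLg' 2
  set N := ‖Lg‖^2 with hNdef
  have hden : (0:ℝ) < N + γ^2 / w := by positivity
  have hden2 : (0:ℝ) < w * N + γ^2 := by positivity
  set lam : ℝ := -La / (N + γ^2 / w) with hlamdef
  have hlam : 0 < lam := by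
    apply div_pos; linarith; exact hden
  have hc : c = γ * lam / w := by
    show -γ * La / (w * N + γ^2) = γ * lam / w
    rw [hlamdef]
    field_simp
  have hcpos : 0 < c := by
    rw [hc]; positivity
  have ha_inner : (inner ℝ Lg a : ℝ) = lam * N := by
    show (inner ℝ Lg (lam • Lg) : ℝ) = lam * N
    rw [real_inner_smul_right, real_inner_self_eq_norm_sq]
  have hactive : La + (inner ℝ Lg a : ℝ) + γ * c = 0 := by
    rw [ha_inner, hc, hlamdef]
    field_simp
    ring
  refine ⟨hcpos, hactive, ?_⟩
  intro b d hcon hd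
  have hab : (inner ℝ a b : ℝ) = lam * (inner ℝ Lg b : ℝ) := by
    show (inner ℝ (lam • Lg) b : ℝ) = _
    rw [real_inner_smul_left]
  have hna : ‖a‖^2 = lam^2 * N := by
    show ‖lam • Lg‖^2 = _
    rw [norm_smul]
    simp [abs_of_pos hlam, hNdef, mul_pow]
  have hsub : ‖b - a‖^2 = ‖b‖^2 - 2 * (lam * (inner ℝ Lg b : ℝ)) + lam^2 * N := by
    rw [@norm_sub_sq_real, real_inner_comm, hab, hna]
  have h1 : (0:ℝ) ≤ ‖b - a‖^2 := by positivity
  have h2 : (0:ℝ) ≤ (d - c)^2 := sq_nonneg _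
  -- constraint rewritten with active one
  have hkey : lam * (La + (inner ℝ Lg b : ℝ) + γ * d) ≥ 0 :=
    mul_nonneg hlam.le hcon
  have hactive' : La + lam * N + γ * c = 0 := by rw [← ha_inner]; exact hactive
  rw [hsub] at h1
  have hwc : w * c = γ * lam := by rw [hc]; field_simp
  have hact2 : lam * (La + lam * N + γ * c) = 0 := by rw [hactive']; ring
  nlinarith [hkey, hact2, mul_nonneg hw.le h2, h1, hwc]
end

section
/- In the setting of the KKT system for the CBF-QP with $L_g \neq 0$, $w > 0$, $\gamma > 0$: if $L_a \geq 0$, then the only KKT point has $\lambda_1 = 0$, $a^* = 0$, $c^* = 0$. Conversely, if $L_a < 0$, then every KKT point has $\lambda_1 > 0$ and the CBF constraint is active: $L_a + \langle L_g, a^*\rangle + \gamma c^* = 0$. -/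
/-- dichotomy of KKT points of the CBF-QP according to the sign of `La`. -/
theorem stmt_10 {p : ℕ} (Lg : EuclideanSpace ℝ (Fin p)) (hLg : Lg ≠ 0)
    (La w γ : ℝ) (hw : 0 < w) (hγ : 0 < γ)
    (a : EuclideanSpace ℝ (Fin p)) (c lam1 lam2 : ℝ)
    (hstat1 : a = lam1 • Lg)
    (hstat2 : w * c = lam1 * γ + lam2)
    (hcomp1 : lam1 * (La + (inner ℝ Lg a : ℝ) + γ * c) = 0)
    (hcomp2 : lam2 * c = 0)
    (hlam1 : 0 ≤ lam1) (hlam2 : 0 ≤ lam2)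
    (hfeas1 : La + (inner ℝ Lg a : ℝ) + γ * c ≥ 0) (hfeas2 : c ≥ 0) :
    (0 ≤ La → lam1 = 0 ∧ a = 0 ∧ c = 0) ∧
    (La < 0 → lam1 > 0 ∧ La + (inner ℝ Lg a : ℝ) + γ * c = 0) := by
  have hinner : (inner ℝ Lg a : ℝ) = lam1 * ‖Lg‖ ^ 2 := by
    rw [hstat1, inner_smul_right, real_inner_self_eq_norm_sq]
  have hLg2 : 0 < ‖Lg‖ ^ 2 := by have := norm_pos_iff.mpr hLg; positivity
  have hlam1zero : lam1 = 0 → a = 0 ∧ c = 0 := by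
    intro h0
    have ha : a = 0 := by rw [hstat1, h0, zero_smul]
    have hl2 : lam2 = w * c := by rw [hstat2, h0]; ring
    have : w * c * c = 0 := by rw [← hl2]; exact hcomp2
    have hc : c = 0 := by
      rcases mul_eq_zero.mp this with h | h
      · rcases mul_eq_zero.mp h with h | h
        · exact absurd h hw.ne'
        · exact h
      · exact h
    exact ⟨ha, hc⟩
  constructor
  · intro hLa
    have h1 : lam1 = 0 := by
      by_contra h
      have hpos : 0 < lam1 := lt_of_le_of_ne hlam1 (Ne.symm h)
      have hact : La + (inner ℝ Lg a : ℝ) + γ * c = 0 := by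
        rcases mul_eq_zero.mp hcomp1 with h | h
        · exact absurd h hpos.ne'
        · exact h
      rw [hinner] at hact
      nlinarith [mul_pos hpos hLg2, mul_nonneg hγ.le hfeas2]
    obtain ⟨ha, hc⟩ := hlam1zero h1
    exact ⟨h1, ha, hc⟩
  · intro hLa
    have h1 : 0 < lam1 := by
      rcases lt_or_eq_of_le hlam1 with h | h
      · exact h
      · exfalso
        obtain ⟨ha, hc⟩ := hlam1zero h.symm
        rw [ha, hc] at hfeas1
        simp at hfeas1
        linarith
    have hact : La + (inner ℝ Lg a : ℝ) + γ * c = 0 := by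
      rcases mul_eq_zero.mp hcomp1 with h | h
      · exact absurd h h1.ne'
      · exact h
    exact ⟨h1, hact⟩
end
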